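/- Consider a canonical assignment can : Q → (Fin m → M) from dictionary states (finite subsets of a universe U of size at most n) to memory representations, where each memory cell stores a value in M. Suppose can is natural with k bits of metadata: M = (Option U) × (Fin (2^k)), and for each state q, every cell's first component is either ⊥ or an element of q, and every element of q appears as the first component of some cell. If m·t < u where u = |U|, and (t+2)·2^k < ∑_{ℓ=0}^{min(t+1,n)} C(t+1, ℓ), then there exists an element v ∈ U and, for every cell index ℓ < m, states q, q' ∈ Q with v ∈ q, v ∉ q', and can(q)[ℓ] = can(q')[ℓ]. -/

import Mathlib

theorem stmt6 (U : Type*) [Fintype U] [DecidableEq U] (u n m k t : ℕ)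
    (hu : Fintype.card U = u) (hn : 2 ≤ n)
    (can : {q : Finset U // q.card ≤ n} → Fin m → Option U × Fin (2 ^ k))
    -- naturality: each cell's first component is ⊥ or an element of the state
    (hnat1 : ∀ q ℓ a, (can q ℓ).1 = some a → a ∈ q.1)
    -- naturality: each element of the state appears in some cell
    (hnat2 : ∀ q, ∀ a ∈ q.1, ∃ ℓ, (can q ℓ).1 = some a)
    (hmt : m * t < u)
    (hcount : (t + 2) * 2 ^ k <
      ∑ ℓ ∈ Finset.range (min (t + 1) n + 1), Nat.choose (t + 1) ℓ) :
    ∃ v : U, ∀ ℓ : Fin m, ∃ q q' : {q : Finset U // q.card ≤ n},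
      v ∈ q.1 ∧ v ∉ q'.1 ∧ can q ℓ = can q' ℓ := by
  classical
  by_contra hcon
  push_neg at hcon
  choose f hf using hcon
  -- pigeonhole: some cell ℓ has at least t+1 elements assigned to it
  obtain ⟨ℓ, -, hℓ⟩ := Finset.exists_lt_card_fiber_of_mul_lt_card_of_maps_to
    (s := (Finset.univ : Finset U)) (t := (Finset.univ : Finset (Fin m)))
    (f := f) (fun a _ => Finset.mem_univ _)
    (by simpa [hu] using hmt)
  obtain ⟨S, hSsub, hScard⟩ :=
    Finset.exists_subset_card_eq (s := Finset.univ.filter fun a => f a = ℓ) (n := t + 1) hℓ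
  have hSf : ∀ v ∈ S, f v = ℓ := by
    intro v hv
    have := hSsub hv
    simpa using this
  -- the map from small subsets of S to cell contents
  set g : Finset U → Option U × Fin (2 ^ k) := fun A =>
    if h : A.card ≤ n then can ⟨A, h⟩ ℓ else (none, ⟨0, Nat.pow_pos (by norm_num : 0 < 2)⟩)
    with hg
  set T : Finset (Finset U) := S.powerset.filter (fun A => A.card ≤ n) with hT
  set P : Finset (Option U × Fin (2 ^ k)) :=
    (insert none (S.image some)) ×ˢ (Finset.univ : Finset (Fin (2 ^ k))) with hP
  have hmaps : ∀ A ∈ T, g A ∈ P := by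
    intro A hA
    rw [hT, Finset.mem_filter, Finset.mem_powerset] at hA
    obtain ⟨hAS, hAn⟩ := hA
    rw [hg]
    simp only [dif_pos hAn]
    rw [hP, Finset.mem_product]
    refine ⟨?_, Finset.mem_univ _⟩
    rcases h1 : (can ⟨A, hAn⟩ ℓ).1 with _ | a
    · exact Finset.mem_insert_self _ _
    · refine Finset.mem_insert_of_mem ?_
      exact Finset.mem_image_of_mem some (hAS (hnat1 ⟨A, hAn⟩ ℓ a h1))
  have hinj : Set.InjOn g T := by
    have key : ∀ A ∈ T, ∀ B ∈ T, g A = g B → ∀ v ∈ A, v ∉ B → False := by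
      intro A hA B hB hgAB v hvA hvB
      rw [hT, Finset.mem_filter, Finset.mem_powerset] at hA hB
      have hfv : f v = ℓ := hSf v (hA.1 hvA)
      have := hf v ⟨A, hA.2⟩ ⟨B, hB.2⟩ hvA hvB
      rw [hfv] at this
      apply this
      have hA' : g A = can ⟨A, hA.2⟩ ℓ := by rw [hg]; simp [hA.2]
      have hB' : g B = can ⟨B, hB.2⟩ ℓ := by rw [hg]; simp [hB.2]
      rw [← hA', ← hB', hgAB]
    intro A hA B hB hgAB
    by_contra hne
    rcases Finset.not_subset.1 (fun h => hne (Finset.Subset.antisymm h (fun x hx => by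
      by_contra hxA
      exact key B hB A hA hgAB.symm x hx hxA))) with ⟨v, hvA, hvB⟩
    exact key A hA B hB hgAB v hvA hvB
  have hTP : T.card ≤ P.card := Finset.card_le_card_of_injOn g hmaps hinj
  have hPcard : P.card = (t + 2) * 2 ^ k := by
    rw [hP, Finset.card_product, Finset.card_insert_of_notMem (by simp),
      Finset.card_image_of_injective _ (Option.some_injective U), hScard]
    simp
  have hsum : ∑ j ∈ Finset.range (min (t + 1) n + 1), Nat.choose (t + 1) j ≤ T.card := by
    have hsub : (Finset.range (min (t + 1) n + 1)).biUnion
        (fun j => S.powersetCard j) ⊆ T := by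
      intro A hA
      rw [Finset.mem_biUnion] at hA
      obtain ⟨j, hj, hAj⟩ := hA
      rw [Finset.mem_powersetCard] at hAj
      rw [hT, Finset.mem_filter, Finset.mem_powerset]
      rw [Finset.mem_range] at hj
      exact ⟨hAj.1, by omega⟩
    have hdisj : ∀ x ∈ Finset.range (min (t + 1) n + 1),
        ∀ y ∈ Finset.range (min (t + 1) n + 1), x ≠ y →
        Disjoint (S.powersetCard x) (S.powersetCard y) := by
      intro x _ y _ hxy
      rw [Finset.disjoint_left]
      intro A hAx hAy
      rw [Finset.mem_powersetCard] at hAx hAy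
      exact hxy (hAx.2.symm.trans hAy.2)
    calc ∑ j ∈ Finset.range (min (t + 1) n + 1), Nat.choose (t + 1) j
        = ((Finset.range (min (t + 1) n + 1)).biUnion
            (fun j => S.powersetCard j)).card := by
          rw [Finset.card_biUnion hdisj]
          refine Finset.sum_congr rfl fun j _ => ?_
          rw [Finset.card_powersetCard, hScard]
      _ ≤ T.card := Finset.card_le_card hsub
  omega
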